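/- Let X be a set of feasible decisions in a type α, let z : Fin p → α → ℝ, fix q : Fin p, parameters ε : Fin p → ℝ, a scalar ρ > 0, and range amplitudes r : Fin p → ℝ with r k > 0 for all k ≠ q. Consider the augmented ε-constraint problem: over pairs (x, s) with x ∈ X, s k ≥ 0 and z k x − s k = ε k for all k ≠ q, maximize z q x + ρ · ∑_{k ≠ q} 10^{k−1} · (s k / r k). If (x*, s*) is an optimal solution of this problem (i.e., a feasible pair whose objective value is greater than or equal to that of every feasible pair), then x* is an efficient solution of the multi-objective maximization problem over X: there is no x ∈ X such that z k x ≥ z k x* for every k with z k x > z k x* for at least one k. -/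

import Mathlib

/-- Theorem 3 (Mavrotas, 2009; Mavrotas & Florios, 2013): an optimal solution
of the augmented ε-constraint problem (with slacks added to the objective) is
an efficient solution of the multi-objective problem. -/
theorem augmented_epsilon_constraint_efficient
    {α : Type*} {p : ℕ}
    (X : Set α) (z : Fin p → α → ℝ) (q : Fin p) (ε : Fin p → ℝ)
    (ρ : ℝ) (hρ : 0 < ρ)
    (r : Fin p → ℝ) (hr : ∀ k, k ≠ q → 0 < r k)
    (xstar : α) (sstar : Fin p → ℝ)
    (hx : xstar ∈ X)
    (hs : ∀ k, k ≠ q → 0 ≤ sstar k)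
    (heq : ∀ k, k ≠ q → z k xstar - sstar k = ε k)
    (hopt : ∀ (x : α) (s : Fin p → ℝ),
      x ∈ X → (∀ k, k ≠ q → 0 ≤ s k) →
      (∀ k, k ≠ q → z k x - s k = ε k) →
      z q x + ρ * ∑ k ∈ Finset.univ.erase q, (10 : ℝ) ^ ((k : ℕ) - 1) * (s k / r k) ≤
        z q xstar + ρ * ∑ k ∈ Finset.univ.erase q, (10 : ℝ) ^ ((k : ℕ) - 1) * (sstar k / r k)) :
    ¬ ∃ x ∈ X, (∀ k, z k xstar ≤ z k x) ∧ (∃ k, z k xstar < z k x) := by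
  rintro ⟨x, hxX, hle, k0, hk0⟩
  set s : Fin p → ℝ := fun k => z k x - ε k with hs_def
  have hse : ∀ k, k ≠ q → s k = sstar k + (z k x - z k xstar) := by
    intro k hk
    have := heq k hk
    simp only [hs_def]
    linarith
  have hsnn : ∀ k, k ≠ q → 0 ≤ s k := by
    intro k hk
    rw [hse k hk]
    have := hs k hk
    have := hle k
    linarith
  have hsge : ∀ k, k ≠ q → sstar k ≤ s k := by
    intro k hk
    rw [hse k hk]
    have := hle k
    linarith
  have hfeas : ∀ k, k ≠ q → z k x - s k = ε k := by
    intro k hk; simp [hs_def]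
  have hopt' := hopt x s hxX hsnn hfeas
  have htermle : ∀ k ∈ Finset.univ.erase q,
      (10 : ℝ) ^ ((k : ℕ) - 1) * (sstar k / r k) ≤
      (10 : ℝ) ^ ((k : ℕ) - 1) * (s k / r k) := by
    intro k hk
    have hk' : k ≠ q := Finset.ne_of_mem_erase hk
    have hrk := hr k hk'
    have h10 : (0:ℝ) ≤ (10 : ℝ) ^ ((k : ℕ) - 1) := by positivity
    have := hsge k hk'
    gcongr
  have hsumle : ∑ k ∈ Finset.univ.erase q, (10 : ℝ) ^ ((k : ℕ) - 1) * (sstar k / r k) ≤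
      ∑ k ∈ Finset.univ.erase q, (10 : ℝ) ^ ((k : ℕ) - 1) * (s k / r k) :=
    Finset.sum_le_sum htermle
  rcases eq_or_ne k0 q with hq | hq
  · -- z q x > z q xstar
    subst hq
    nlinarith [mul_le_mul_of_nonneg_left hsumle hρ.le]
  · -- strict in the sum
    have hstrict : ∑ k ∈ Finset.univ.erase q, (10 : ℝ) ^ ((k : ℕ) - 1) * (sstar k / r k) <
        ∑ k ∈ Finset.univ.erase q, (10 : ℝ) ^ ((k : ℕ) - 1) * (s k / r k) := by
      apply Finset.sum_lt_sum htermle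
      refine ⟨k0, Finset.mem_erase.mpr ⟨hq, Finset.mem_univ _⟩, ?_⟩
      have hrk := hr k0 hq
      have hsk : sstar k0 < s k0 := by
        rw [hse k0 hq]; linarith
      have h10 : (0:ℝ) < (10 : ℝ) ^ ((k0 : ℕ) - 1) := by positivity
      exact mul_lt_mul_of_pos_left (div_lt_div_of_pos_right hsk hrk) h10
    have := hle q
    nlinarith [mul_lt_mul_of_pos_left hstrict hρ]
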